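/- Let (a,b) be a reversed sum-product pair for base β with a < β < b, and write b = b_r·β^r + ... + b₀ with r ≥ 1. Then there exist integers 0 ≤ λ < a and 0 ≤ ρ < a such that a + b₀ = a·b_r + λ and a·b₀ = b_r + ρ·β. -/

import Mathlib

private lemma digits_getLast_eq {β : ℕ} (hβ : 1 < β) :
    ∀ m : ℕ, ∀ h : Nat.digits β m ≠ [],
      (Nat.digits β m).getLast h = m / β ^ Nat.log β m := by
  intro m
  induction m using Nat.strong_induction_on with
  | _ m ih =>
    intro h
    have hm : m ≠ 0 := Nat.digits_ne_nil_iff_ne_zero.mp h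
    by_cases hlt : m < β
    · simp [Nat.digits_of_lt β m hm hlt, Nat.log_of_lt hlt]
    · push_neg at hlt
      have hq0 : m / β ≠ 0 := by
        have := Nat.div_pos hlt (by omega : 0 < β)
        omega
      have h2 : Nat.digits β (m / β) ≠ [] := Nat.digits_ne_nil_iff_ne_zero.mpr hq0
      rw [Nat.digits_getLast m hβ h h2, ih (m / β) (Nat.div_lt_self (by omega) hβ) h2,
        Nat.log_div_base, Nat.div_div_eq_div_mul]
      congr 1
      rw [← pow_succ']
      congr 1
      have := Nat.log_pos hβ hlt
      omega

private lemma digits_pow_self {β : ℕ} (hβ : 1 < β) :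
    ∀ r : ℕ, Nat.digits β (β ^ r) = List.replicate r 0 ++ [1]
  | 0 => by simp [Nat.digits_of_lt β 1 one_ne_zero hβ]
  | (r+1) => by
      rw [Nat.digits_def' hβ (pow_pos (by omega : 0 < β) _)]
      have h1 : β ^ (r+1) % β = 0 := by
        rw [pow_succ]; exact Nat.mul_mod_left _ _
      have h2 : β ^ (r+1) / β = β ^ r := by
        rw [pow_succ]; exact Nat.mul_div_cancel _ (by omega)
      rw [h1, h2, digits_pow_self hβ r, List.replicate_succ]
      rfl

private lemma ofDigits_replicate_zero (β : ℕ) : ∀ r, Nat.ofDigits β (List.replicate r 0) = 0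
  | 0 => rfl
  | (r+1) => by
      simp [List.replicate_succ, Nat.ofDigits_cons, ofDigits_replicate_zero β r]

/-- `(a, b)` is a reversed sum-product pair for base `β`: `a ≤ b` are positive
integers and the base-`β` digit sequence of `a * b` is the reverse of that of
`a + b` (in particular they have the same number of digits). -/
def IsRSP (β a b : ℕ) : Prop :=
  0 < a ∧ a ≤ b ∧ Nat.digits β (a * b) = (Nat.digits β (a + b)).reverse

theorem stmt_11 (β a b : ℕ) (hβ : 2 ≤ β) (h : IsRSP β a b)
    (ha : a < β) (hb : β < b) :
    ∃ lam rho : ℕ, lam < a ∧ rho < a ∧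
      a + b % β = a * (b / β ^ ((Nat.digits β b).length - 1)) + lam ∧
      a * (b % β) = b / β ^ ((Nat.digits β b).length - 1) + rho * β := by
  obtain ⟨ha0, hab, hd⟩ := h
  have hβ1 : 1 < β := hβ
  have hβ0 : 0 < β := by omega
  have hb0 : b ≠ 0 := by omega
  have hn0 : a + b ≠ 0 := by omega
  have hnpos : 0 < a + b := by omega
  have hppos : 0 < a * b := Nat.mul_pos ha0 (by omega)
  have hp0 : a * b ≠ 0 := by omega
  obtain ⟨r, hrdef⟩ : ∃ r, Nat.log β b = r := ⟨_, rfl⟩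
  rw [Nat.digits_len β b hβ1 hb0, hrdef]
  simp only [Nat.add_sub_cancel]
  have hr1 : 1 ≤ r := by rw [← hrdef]; exact Nat.log_pos hβ1 (le_of_lt hb)
  have hbl : β ^ r ≤ b := by rw [← hrdef]; exact Nat.pow_log_le_self β hb0
  have hbu : b < β ^ (r + 1) := by rw [← hrdef]; exact Nat.lt_pow_succ_log_self hβ1 b
  obtain ⟨s, hsdef⟩ : ∃ s, Nat.log β (a + b) = s := ⟨_, rfl⟩
  have hlog : Nat.log β (a * b) = s := by
    have hL := congrArg List.length hd
    rw [List.length_reverse, Nat.digits_len β _ hβ1 hp0, Nat.digits_len β _ hβ1 hn0,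
      hsdef] at hL
    omega
  have hne_p : Nat.digits β (a * b) ≠ [] := Nat.digits_ne_nil_iff_ne_zero.mpr hp0
  have hne_n : Nat.digits β (a + b) ≠ [] := Nat.digits_ne_nil_iff_ne_zero.mpr hn0
  have key1 : a * b / β ^ s = (a + b) % β := by
    have h1 : (Nat.digits β (a * b)).getLast? = some ((a + b) % β) := by
      rw [hd, List.getLast?_reverse, Nat.digits_def' hβ1 hnpos, List.head?_cons]
    have h2 : (Nat.digits β (a * b)).getLast? = some (a * b / β ^ s) := by
      rw [List.getLast?_eq_getLast hne_p, digits_getLast_eq hβ1 _ hne_p, hlog]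
    have := h2.symm.trans h1
    simpa using this
  have key2 : a * b % β = (a + b) / β ^ s := by
    have h1 : (Nat.digits β (a * b)).head? = some (a * b % β) := by
      rw [Nat.digits_def' hβ1 hppos, List.head?_cons]
    have h2 : (Nat.digits β (a * b)).head? = some ((a + b) / β ^ s) := by
      rw [hd, List.head?_reverse, List.getLast?_eq_getLast hne_n,
        digits_getLast_eq hβ1 _ hne_n, hsdef]
    have := h1.symm.trans h2
    simpa using this
  have hXb : β ≤ β ^ (r + 1) := Nat.le_self_pow (by omega) β
  have hX2 : β * β ≤ β ^ (r + 1) := by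
    have h1 : β ^ 1 ≤ β ^ r := Nat.pow_le_pow_right (by omega) hr1
    calc β * β = β * β ^ 1 := by rw [pow_one]
      _ ≤ β * β ^ r := Nat.mul_le_mul_left β (by simpa using h1)
      _ = β ^ (r + 1) := (pow_succ' β r).symm
  have hsl : r ≤ s := by
    rw [← hrdef, ← hsdef]
    exact Nat.log_mono_right (Nat.le_add_left b a)
  have hsu : s ≤ r + 1 := by
    have h2 : a + b < β ^ (r + 2) := by
      have h3 : β ^ (r + 1) * 2 ≤ β ^ (r + 2) := by
        rw [pow_succ]
        exact Nat.mul_le_mul (le_refl _) hβ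
      omega
    have := Nat.log_lt_of_lt_pow hn0 h2
    omega
  -- Step A : s = r
  have hA : s = r := by
    by_contra hne
    have hs2 : s = r + 1 := by omega
    rw [hs2] at key1 key2
    have hnl : β ^ (r + 1) ≤ a + b := by
      have h1 := Nat.pow_log_le_self β hn0
      rw [hsdef, hs2] at h1
      exact h1
    have hpl : β ^ (r + 1) ≤ a * b := by
      have h1 := Nat.pow_log_le_self β hp0
      rw [hlog, hs2] at h1
      exact h1
    have hpsucc : β ^ (r + 1) = β * β ^ r := pow_succ' β r
    have hd1 : 1 ≤ β ^ (r + 1) - b := by omega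
    set d := β ^ (r + 1) - b with hddef
    have hda : d ≤ a := by omega
    have hnmod : (a + b) % β = a - d := by
      have hsplit : a + b = β * β ^ r + (a - d) := by omega
      rw [hsplit, Nat.mul_add_mod, Nat.mod_eq_of_lt (by omega)]
    have hdlt : d < a := by
      by_contra hge
      have h1 : 1 ≤ a * b / β ^ (r + 1) := (Nat.one_le_div_iff (pow_pos hβ0 _)).mpr hpl
      rw [key1, hnmod] at h1
      omega
    have hbd : b + d = β ^ (r + 1) := by omega
    have hmul : a * b + a * d = a * β ^ (r + 1) := by rw [← hbd, Nat.mul_add]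
    have hadpos : 0 < a * d := Nat.mul_pos ha0 (by omega)
    have hadX : a * d < β ^ (r + 1) := by
      have h1 : a * d < β * β :=
        mul_lt_mul'' ha (lt_of_le_of_lt hda ha) (Nat.zero_le _) (Nat.zero_le _)
      omega
    have hb1 : (a - 1) * β ^ (r + 1) + β ^ (r + 1) = a * β ^ (r + 1) := by
      rw [← Nat.succ_mul]
      congr 1
      omega
    have hpdiv : a * b / β ^ (r + 1) = a - 1 := by
      apply Nat.div_eq_of_lt_le
      · omega
      · have hb2 : (a - 1 + 1) * β ^ (r + 1) = a * β ^ (r + 1) := by congr 1; omega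
        rw [hb2]; omega
    have hdeq1 : d = 1 := by
      rw [key1, hnmod] at hpdiv
      omega
    have hndiv : (a + b) / β ^ (r + 1) = 1 := by
      apply Nat.div_eq_of_lt_le
      · simpa using hnl
      · have : (1 + 1) * β ^ (r + 1) = β ^ (r + 1) + β ^ (r + 1) := by ring
        omega
    have hpmod : a * b % β = β - a := by
      have hba : b + 1 = β ^ (r + 1) := by omega
      have hpa : a * b + a = a * β ^ (r + 1) := by
        rw [← hba, Nat.mul_add, Nat.mul_one]
      obtain ⟨k, hk⟩ : β ∣ a * β ^ (r + 1) :=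
        Dvd.dvd.mul_left (dvd_pow_self β (by omega : r + 1 ≠ 0)) a
      have hk1 : 1 ≤ k := by
        rcases Nat.eq_zero_or_pos k with h0 | h1
        · rw [h0, Nat.mul_zero] at hk; omega
        · exact h1
      have hmsucc : β * (k - 1) + β = β * k := by
        rw [← Nat.mul_succ]; congr 1; omega
      have hsplit : a * b = β * (k - 1) + (β - a) := by omega
      rw [hsplit, Nat.mul_add_mod, Nat.mod_eq_of_lt (by omega)]
    have haβ : a = β - 1 := by
      rw [key2, hndiv] at hpmod
      omega
    have hβ3 : 3 ≤ β := by omega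
    have hnval : a + b = β * β ^ r + (β - 2) := by omega
    have hdn : Nat.digits β (a + b) = (β - 2) :: (List.replicate r 0 ++ [1]) := by
      rw [Nat.digits_def' hβ1 hnpos, hnval, Nat.mul_add_div hβ0, Nat.mul_add_mod,
        Nat.mod_eq_of_lt (by omega), Nat.div_eq_of_lt (by omega), Nat.add_zero,
        digits_pow_self hβ1 r]
    have hpval : a * b = 1 + β * (β ^ r * (β - 2)) := by
      have h1 := Nat.ofDigits_digits β (a * b)
      rw [hd, hdn, List.reverse_cons, List.reverse_append, List.reverse_replicate] at h1
      rw [Nat.ofDigits_append, Nat.ofDigits_append, ofDigits_replicate_zero] at h1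
      simp [Nat.ofDigits_cons, Nat.ofDigits_nil] at h1
      rw [← h1]
      ring_nf
    -- final contradiction
    have hc : β ≤ β ^ r := by
      calc β = β ^ 1 := (pow_one β).symm
        _ ≤ β ^ r := Nat.pow_le_pow_right (by omega) hr1
    have hQβ : β < β * β ^ r :=
      lt_of_lt_of_le ((Nat.lt_mul_iff_one_lt_right hβ0).mpr hβ1) (Nat.mul_le_mul_left β hc)
    have e1 : a * b + a = a * (β * β ^ r) := by
      have hba : b + 1 = β * β ^ r := by omega
      rw [← hba, Nat.mul_add, Nat.mul_one]
    have h2a : a = (β - 2) + 1 := by omega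
    have e2 : a * (β * β ^ r) = β * (β ^ r * (β - 2)) + β * β ^ r := by
      rw [h2a, Nat.succ_mul]
      congr 1
      ring
    omega
  -- Step B/C : s = r, no carries
  rw [hA] at key1 key2
  have hpowr : 0 < β ^ r := pow_pos hβ0 r
  have hbr1 : 1 ≤ b / β ^ r := (Nat.one_le_div_iff hpowr).mpr hbl
  have boundA : a * (b / β ^ r) ≤ a * b / β ^ r := by
    rw [Nat.le_div_iff_mul_le hpowr, Nat.mul_assoc]
    exact Nat.mul_le_mul_left a (Nat.div_mul_le_self b (β ^ r))
  have boundB : a * b / β ^ r < a * (b / β ^ r) + a := by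
    rw [Nat.div_lt_iff_lt_mul hpowr]
    have hdm := Nat.div_add_mod b (β ^ r)
    have hmlt := Nat.mod_lt b hpowr
    have h1 : b < β ^ r * (b / β ^ r) + β ^ r := by omega
    calc a * b < a * (β ^ r * (b / β ^ r) + β ^ r) :=
          mul_lt_mul_of_pos_left h1 ha0
      _ = (a * (b / β ^ r) + a) * β ^ r := by ring
  have hmb : b % β < β := Nat.mod_lt b hβ0
  have hcarry : a + b % β < β := by
    by_contra hge
    push_neg at hge
    have hnm : (a + b) % β = a + b % β - β := by
      rw [Nat.add_mod, Nat.mod_eq_of_lt ha, Nat.mod_eq_sub_mod (by omega),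
        Nat.mod_eq_of_lt (by omega)]
    have halem : a ≤ a * (b / β ^ r) := Nat.le_mul_of_pos_right a hbr1
    have hlt : a * b / β ^ r < a * (b / β ^ r) := by
      rw [key1, hnm]
      omega
    omega
  have hnmodr : (a + b) % β = a + b % β := by
    rw [Nat.add_mod, Nat.mod_eq_of_lt ha]
    exact Nat.mod_eq_of_lt hcarry
  have htop : (a + b) / β ^ r = b / β ^ r := by
    have hlb : b / β ^ r ≤ (a + b) / β ^ r := Nat.div_le_div_right (Nat.le_add_left b a)
    have hub : (a + b) / β ^ r < b / β ^ r + 1 := by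
      rw [Nat.div_lt_iff_lt_mul hpowr]
      by_contra hge2
      push_neg at hge2
      have hdm := Nat.div_add_mod b (β ^ r)
      have hexp : (b / β ^ r + 1) * β ^ r = β ^ r * (b / β ^ r) + β ^ r := by ring
      have hstep : β ^ r ≤ a + b % β ^ r := by omega
      have hmm : b % β ^ r % β = b % β := Nat.mod_mod_of_dvd b (dvd_pow_self β (by omega : r ≠ 0))
      have hdm2 := Nat.div_add_mod (b % β ^ r) β
      have hq2 : b % β ^ r / β < β ^ (r - 1) := by
        rw [Nat.div_lt_iff_lt_mul hβ0]
        have hpw : β ^ (r - 1) * β = β ^ r := by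
          rw [← pow_succ]; congr 1; omega
        have := Nat.mod_lt b hpowr
        omega
      have hms : β * (b % β ^ r / β + 1) = β * (b % β ^ r / β) + β := Nat.mul_succ β _
      have hq2' : β * (b % β ^ r / β + 1) ≤ β * β ^ (r - 1) :=
        Nat.mul_le_mul_left β hq2
      have hpow : β * β ^ (r - 1) = β ^ r := by
        rw [← pow_succ']; congr 1; omega
      omega
    omega
  refine ⟨a * b / β ^ r - a * (b / β ^ r), a * (b % β) / β, by omega, ?_, ?_, ?_⟩
  · rw [Nat.div_lt_iff_lt_mul hβ0]
    exact mul_lt_mul_of_pos_left hmb ha0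
  · rw [hnmodr] at key1
    omega
  · rw [htop] at key2
    have e3 : a * (b % β) % β = b / β ^ r := by
      rw [Nat.mul_mod, Nat.mod_mod_of_dvd b dvd_rfl, ← Nat.mul_mod]
      exact key2
    have e4 := Nat.div_add_mod (a * (b % β)) β
    rw [e3] at e4
    have e5 : β * (a * (b % β) / β) = (a * (b % β) / β) * β := Nat.mul_comm _ _
    omega
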